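/- For all natural numbers n and real x, y, the Laplace-type integral (1/n!) ∫_0^∞ e^{-s} H_n(-s x, -s y) ds equals (-1)^n Σ_{r=0}^{⌊n/2⌋} (n-r)! x^(n-2r) (-y)^r / ((n-2r)! r!), i.e. the two-variable Chebyshev polynomial of the second kind U_n(x,y). -/

import Mathlib

open Real Finset MeasureTheory

noncomputable def hermite2 (n : ℕ) (x y : ℝ) : ℝ :=
  (Nat.factorial n : ℝ) *
    ∑ r ∈ Finset.range (n / 2 + 1),
      x ^ (n - 2 * r) * y ^ r / ((Nat.factorial (n - 2 * r) : ℝ) * (Nat.factorial r : ℝ))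

lemma gammaAux_integrable (k : ℕ) :
    IntegrableOn (fun s : ℝ => Real.exp (-s) * s ^ k) (Set.Ioi 0) := by
  have h := Real.GammaIntegral_convergent (s := (k : ℝ) + 1) (by positivity)
  refine h.congr_fun ?_ measurableSet_Ioi
  intro s hs
  simp only [add_sub_cancel_right]
  rw [Real.rpow_natCast]

lemma gammaAux_integral (k : ℕ) :
    ∫ s in Set.Ioi (0 : ℝ), Real.exp (-s) * s ^ k = (Nat.factorial k : ℝ) := by
  have h := Real.Gamma_eq_integral (s := (k : ℝ) + 1) (by positivity)
  rw [show ((k : ℝ) + 1) = ((k : ℕ) : ℝ) + 1 by norm_num, Real.Gamma_nat_eq_factorial] at h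
  rw [h]
  refine setIntegral_congr_fun measurableSet_Ioi fun s hs => ?_
  simp only [add_sub_cancel_right]
  rw [Real.rpow_natCast]

theorem cheb2_integral_repr (n : ℕ) (x y : ℝ) :
    (1 / (Nat.factorial n : ℝ)) *
        ∫ s in Set.Ioi (0 : ℝ), Real.exp (-s) * hermite2 n (-s * x) (-s * y) =
      (-1 : ℝ) ^ n *
        ∑ r ∈ Finset.range (n / 2 + 1),
          (Nat.factorial (n - r) : ℝ) * x ^ (n - 2 * r) * (-y) ^ r /
            ((Nat.factorial (n - 2 * r) : ℝ) * (Nat.factorial r : ℝ)) := by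
  have key : ∀ r ∈ Finset.range (n / 2 + 1), ∀ s ∈ Set.Ioi (0:ℝ),
      Real.exp (-s) * ((Nat.factorial n : ℝ) *
        ((-s * x) ^ (n - 2 * r) * (-s * y) ^ r /
          ((Nat.factorial (n - 2 * r) : ℝ) * (Nat.factorial r : ℝ)))) =
      ((Nat.factorial n : ℝ) * ((-1:ℝ) ^ (n - r) * x ^ (n - 2 * r) * y ^ r /
          ((Nat.factorial (n - 2 * r) : ℝ) * (Nat.factorial r : ℝ)))) *
        (Real.exp (-s) * s ^ (n - r)) := by
    intro r hr s _
    have h2r : 2 * r ≤ n := by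
      have := Finset.mem_range.mp hr
      omega
    have hnr : (n - 2 * r) + r = n - r := by omega
    have e1 : (-1:ℝ) ^ (n - 2 * r) * (-1:ℝ) ^ r = (-1:ℝ) ^ (n - r) := by
      rw [← pow_add, hnr]
    have e2 : s ^ (n - 2 * r) * s ^ r = s ^ (n - r) := by
      rw [← pow_add, hnr]
    have : (-s * x) ^ (n - 2 * r) * (-s * y) ^ r
        = (-1:ℝ) ^ (n - r) * x ^ (n - 2 * r) * y ^ r * s ^ (n - r) := by
      rw [mul_pow, mul_pow, neg_pow s, neg_pow s, ← e1, ← e2]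
      ring
    rw [this]; ring
  -- rewrite the integrand as a sum
  have hint : (∫ s in Set.Ioi (0 : ℝ), Real.exp (-s) * hermite2 n (-s * x) (-s * y))
      = ∑ r ∈ Finset.range (n / 2 + 1),
          ((Nat.factorial n : ℝ) * ((-1:ℝ) ^ (n - r) * x ^ (n - 2 * r) * y ^ r /
            ((Nat.factorial (n - 2 * r) : ℝ) * (Nat.factorial r : ℝ)))) *
            (Nat.factorial (n - r) : ℝ) := by
    have step1 : (∫ s in Set.Ioi (0 : ℝ), Real.exp (-s) * hermite2 n (-s * x) (-s * y))
        = ∫ s in Set.Ioi (0 : ℝ), ∑ r ∈ Finset.range (n / 2 + 1),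
            ((Nat.factorial n : ℝ) * ((-1:ℝ) ^ (n - r) * x ^ (n - 2 * r) * y ^ r /
              ((Nat.factorial (n - 2 * r) : ℝ) * (Nat.factorial r : ℝ)))) *
              (Real.exp (-s) * s ^ (n - r)) := by
      refine setIntegral_congr_fun measurableSet_Ioi fun s hs => ?_
      unfold hermite2
      rw [Finset.mul_sum, Finset.mul_sum]
      exact Finset.sum_congr rfl fun r hr => key r hr s hs
    rw [step1, MeasureTheory.integral_finset_sum]
    · exact Finset.sum_congr rfl fun r hr => by
        rw [MeasureTheory.integral_const_mul, gammaAux_integral]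
    · exact fun r _ => (gammaAux_integrable (n - r)).const_mul _
  rw [hint, Finset.mul_sum, Finset.mul_sum]
  refine Finset.sum_congr rfl fun r hr => ?_
  have h2r : 2 * r ≤ n := by
    have := Finset.mem_range.mp hr
    omega
  have hsign : (-1:ℝ) ^ (n - r) = (-1:ℝ) ^ n * (-1:ℝ) ^ r := by
    rw [← pow_add]
    have : n + r = (n - r) + 2 * r := by omega
    rw [this, pow_add]
    simp [pow_mul]
  have hfac : (Nat.factorial n : ℝ) ≠ 0 := by positivity
  rw [hsign, neg_pow y]
  field_simp
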